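/- Let O ⊆ ℂⁿ be a connected open set, V₁,…,Vₙ : O → ℂⁿ holomorphic maps with V₁(q),…,Vₙ(q) a basis of ℂⁿ for every q ∈ O, h₁,…,h_{m+1} holomorphic functions on O (m ≥ n ≥ 1), and α¹,…,α^m multi-indices with |α^i| ≤ l (l ≥ 1), satisfying: (i) det(Λ^{α^i}h_j)_{1≤i,j≤m} ≠ 0 at every point of O; (ii) for every multi-index β with |β| ≤ l+1, the (m+1)×(m+1) determinant with rows (Λ^{α^i}h₁,…,Λ^{α^i}h_{m+1}), i = 1,…,m, and (Λ^βh₁,…,Λ^βh_{m+1}) vanishes identically on O. For each i₀ ∈ {1,…,m}, with (i₁,…,i_{m−1}) the increasing enumeration of {1,…,m}∖{i₀}, let c_{i₀} ∈ ℂ be the (constant) value on O of det(Λ^{α^i}h_{i₁},…,Λ^{α^i}h_{i_{m−1}}, Λ^{α^i}h_{m+1})_{i=1,…,m} ⁄ det(Λ^{α^i}h_{i₁},…,Λ^{α^i}h_{i_{m−1}}, Λ^{α^i}h_{i₀})_{i=1,…,m}. Then for every choice 1 ≤ i₁ < ⋯ < i_{m−1} ≤ m, the determinant det(Λ^{α^i}h_{i₁},…,Λ^{α^i}h_{i_{m−1}},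 Λ^{α^i}(h_{m+1} − Σ_{t=1}^m c_t h_t))_{i=1,…,m} vanishes identically on O. -/
import Mathlib


open scoped BigOperators Matrix

noncomputable section

/-- The derivative of `f` along the holomorphic vector field `V_j`:
`(Λ_j f)(q) = Df(q)[V_j(q)]`. -/
def LamV {n : ℕ} (V : Fin n → (Fin n → ℂ) → (Fin n → ℂ)) (j : Fin n)
    (f : (Fin n → ℂ) → ℂ) : (Fin n → ℂ) → ℂ :=
  fun q => fderiv ℂ f q (V j q)

/-- `Λ^α = Λ_1^{α_1} ∘ ⋯ ∘ Λ_n^{α_n}` for a multi-index `α`. -/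
def LamVMulti {n : ℕ} (V : Fin n → (Fin n → ℂ) → (Fin n → ℂ)) (α : Fin n → ℕ)
    (f : (Fin n → ℂ) → ℂ) : (Fin n → ℂ) → ℂ :=
  (List.finRange n).foldr (fun j g => (LamV V j)^[α j] g) f

/-- The `j`-th element (in increasing order) of `{0,…,m−1} \ {i₀}`. -/
def compIdx {m : ℕ} (i₀ : Fin m) (j : ℕ) (hj : j + 1 < m) : Fin m :=
  if j < (i₀ : ℕ) then ⟨j, Nat.lt_of_succ_lt hj⟩ else ⟨j + 1, hj⟩

section Helpers

variable {n : ℕ} {O : Set (Fin n → ℂ)} {V : Fin n → (Fin n → ℂ) → (Fin n → ℂ)}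

lemma foldr_id' {α β : Type*} (f : β) (L : List α) :
    L.foldr (fun _ g => g) f = f := by induction L <;> simp [*]

lemma lamV_eqOn (hO : IsOpen O) (j : Fin n) {f g : (Fin n → ℂ) → ℂ}
    (hfg : Set.EqOn f g O) : Set.EqOn (LamV V j f) (LamV V j g) O := by
  intro q hq
  have hev : f =ᶠ[nhds q] g := Filter.eventuallyEq_of_mem (hO.mem_nhds hq) hfg
  simp only [LamV, hev.fderiv_eq]

lemma lamV_iter_eqOn (hO : IsOpen O) (j : Fin n) (k : ℕ) {f g : (Fin n → ℂ) → ℂ}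
    (hfg : Set.EqOn f g O) :
    Set.EqOn ((LamV V j)^[k] f) ((LamV V j)^[k] g) O := by
  induction k with
  | zero => simpa
  | succ k ih =>
    rw [Function.iterate_succ_apply', Function.iterate_succ_apply']
    exact lamV_eqOn hO j ih

lemma foldr_eqOn (hO : IsOpen O) (β : Fin n → ℕ) (L : List (Fin n))
    {f g : (Fin n → ℂ) → ℂ} (hfg : Set.EqOn f g O) :
    Set.EqOn (L.foldr (fun j g => (LamV V j)^[β j] g) f)
      (L.foldr (fun j g => (LamV V j)^[β j] g) g) O := by
  induction L with
  | nil => simpa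
  | cons j L ih => exact lamV_iter_eqOn hO j _ ih

lemma lamV_zero (j : Fin n) : LamV V j (fun _ => (0 : ℂ)) = fun _ => 0 := by
  funext q; simp [LamV]

lemma lamVMulti_zero_fun (β : Fin n → ℕ) :
    LamVMulti V β (fun _ => (0 : ℂ)) = fun _ => 0 := by
  unfold LamVMulti
  induction List.finRange n with
  | nil => rfl
  | cons j L ih =>
    simp only [List.foldr_cons, ih]
    exact Function.iterate_fixed (lamV_zero j) (β j)

lemma lamVMulti_eqOn_zero (hO : IsOpen O) (β : Fin n → ℕ)
    {f : (Fin n → ℂ) → ℂ} (hf : Set.EqOn f (fun _ => (0 : ℂ)) O) :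
    Set.EqOn (LamVMulti V β f) (fun _ => (0 : ℂ)) O := by
  intro q hq
  have h1 := foldr_eqOn (V := V) hO β (List.finRange n) hf hq
  have h2 : LamVMulti V β (fun _ => (0 : ℂ)) q = 0 := by
    rw [lamVMulti_zero_fun]
  exact h1.trans h2

lemma lamVMulti_index_zero (f : (Fin n → ℂ) → ℂ) :
    LamVMulti V (fun _ => 0) f = f := by
  unfold LamVMulti
  simp only [Function.iterate_zero, id_eq]
  exact foldr_id' f _

end Helpers

/-- **Lemma 6.4.** Under the hypotheses of Lemma 6.3, let `c_{i₀}` be the constant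
value of the quotient
`det(Λ^{αⁱ}h_{i₁},…,Λ^{αⁱ}h_{i_{m−1}},Λ^{αⁱ}h_{m+1}) /
 det(Λ^{αⁱ}h_{i₁},…,Λ^{αⁱ}h_{i_{m−1}},Λ^{αⁱ}h_{i₀})` on `O`, where `(i₁,…,i_{m−1})`
enumerates `{1,…,m} \ {i₀}` increasingly. Then for every selection
`i₁ < ⋯ < i_{m−1}` from `{1,…,m}`, the determinant
`det(Λ^{αⁱ}h_{i₁},…,Λ^{αⁱ}h_{i_{m−1}},Λ^{αⁱ}(h_{m+1} − ∑_t c_t h_t))` vanishes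
identically on `O`. -/
theorem determinant_with_corrected_column_vanishes
    (n m l : ℕ) (hn : 1 ≤ n) (hnm : n ≤ m) (hl : 1 ≤ l)
    (O : Set (Fin n → ℂ)) (hOopen : IsOpen O) (hOconn : IsConnected O)
    (V : Fin n → (Fin n → ℂ) → (Fin n → ℂ)) (hV : ∀ j, DifferentiableOn ℂ (V j) O)
    (hVbasis : ∀ q ∈ O, LinearIndependent ℂ (fun j : Fin n => V j q))
    (h : Fin (m + 1) → (Fin n → ℂ) → ℂ) (hh : ∀ i, DifferentiableOn ℂ (h i) O)
    (α : Fin m → Fin n → ℕ) (hα : ∀ i, (∑ j, α i j) ≤ l)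
    (hi : ∀ q ∈ O,
      (Matrix.of fun i j : Fin m => LamVMulti V (α i) (h j.castSucc) q).det ≠ 0)
    (hii : ∀ β : Fin n → ℕ, (∑ j, β j) ≤ l + 1 → ∀ q ∈ O,
      (Matrix.of fun i j : Fin (m + 1) =>
        if hi' : (i : ℕ) < m then LamVMulti V (α ⟨i, hi'⟩) (h j) q
        else LamVMulti V β (h j) q).det = 0)
    (c : Fin m → ℂ)
    (hc : ∀ i₀ : Fin m, ∀ q ∈ O,
      (Matrix.of fun i j : Fin m =>
        if hj : (j : ℕ) < m - 1 then
          LamVMulti V (α i) (h (compIdx i₀ j (by omega)).castSucc) q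
        else LamVMulti V (α i) (h (Fin.last m)) q).det
      = c i₀ *
        (Matrix.of fun i j : Fin m =>
          if hj : (j : ℕ) < m - 1 then
            LamVMulti V (α i) (h (compIdx i₀ j (by omega)).castSucc) q
          else LamVMulti V (α i) (h i₀.castSucc) q).det) :
    ∀ (e : Fin (m - 1) → Fin m), StrictMono e → ∀ q ∈ O,
      (Matrix.of fun i j : Fin m =>
        if hj : (j : ℕ) < m - 1 then LamVMulti V (α i) (h (e ⟨j, hj⟩).castSucc) q
        else LamVMulti V (α i)
          (fun x => h (Fin.last m) x - ∑ t : Fin m, c t * h t.castSucc x) q).det = 0 := by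
  have hm : 1 ≤ m := le_trans hn hnm
  -- Main claim: the corrected function vanishes identically on O.
  have key : ∀ q ∈ O, h (Fin.last m) q - ∑ t : Fin m, c t * h t.castSucc q = 0 := by
    intro q hq
    set A : Matrix (Fin m) (Fin m) ℂ :=
      Matrix.of fun i t : Fin m => LamVMulti V (α i) (h t.castSucc) q with hA
    set b : Fin m → ℂ := fun i => LamVMulti V (α i) (h (Fin.last m)) q with hb
    have hdetA : A.det ≠ 0 := hi q hq
    -- Step 1: Cramer numerators.
    have step1 : ∀ i₀ : Fin m, (A.updateCol i₀ b).det = c i₀ * A.det := by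
      intro i₀
      have hσinj : Function.Injective (fun j : Fin m =>
          if hj : (j : ℕ) < m - 1 then compIdx i₀ (j : ℕ) (by omega) else i₀) := by
        intro j1 j2 hj
        have h1 := j1.isLt
        have h2 := j2.isLt
        have h3 := i₀.isLt
        simp only [compIdx] at hj
        rw [Fin.ext_iff] at hj ⊢
        split_ifs at hj <;> simp_all <;> omega
      have hσbij := (Finite.injective_iff_bijective).mp hσinj
      set σ : Equiv.Perm (Fin m) := Equiv.ofBijective _ hσbij with hσdef
      have hσ : ∀ j : Fin m, σ j =
          if hj : (j : ℕ) < m - 1 then compIdx i₀ (j : ℕ) (by omega) else i₀ :=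
        fun j => rfl
      have hne : ∀ (j : ℕ) (hj : j + 1 < m), compIdx i₀ j hj ≠ i₀ := by
        intro j hj
        have h3 := i₀.isLt
        simp only [compIdx]
        split_ifs with h' <;>
          (intro heq; rw [Fin.ext_iff] at heq; simp only [Fin.val_mk] at heq; omega)
      have hM2 : (Matrix.of fun i j : Fin m =>
          if hj : (j : ℕ) < m - 1 then
            LamVMulti V (α i) (h (compIdx i₀ j (by omega)).castSucc) q
          else LamVMulti V (α i) (h i₀.castSucc) q) = A.submatrix id σ := by
        ext i j
        simp only [Matrix.of_apply, Matrix.submatrix_apply, id_eq, hσ j, hA]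
        split_ifs with hj <;> rfl
      have hM1 : (Matrix.of fun i j : Fin m =>
          if hj : (j : ℕ) < m - 1 then
            LamVMulti V (α i) (h (compIdx i₀ j (by omega)).castSucc) q
          else LamVMulti V (α i) (h (Fin.last m)) q)
          = (A.updateCol i₀ b).submatrix id σ := by
        ext i j
        simp only [Matrix.of_apply, Matrix.submatrix_apply, id_eq, hσ j]
        split_ifs with hj
        · rw [Matrix.updateCol_apply, if_neg (hne _ _)]
          simp only [hA, Matrix.of_apply]
        · rw [Matrix.updateCol_apply, if_pos rfl, hb]
      have h1 := hc i₀ q hq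
      rw [hM1, hM2, Matrix.det_permute', Matrix.det_permute'] at h1
      have hs : ((Equiv.Perm.sign σ : ℤ) : ℂ) ≠ 0 := by
        rcases Int.units_eq_one_or (Equiv.Perm.sign σ) with h' | h' <;> simp [h']
      apply mul_left_cancel₀ hs
      rw [h1]; ring
    -- Step 2: A *ᵥ c = b.
    have hcr : Matrix.cramer A b = A.det • c := by
      funext i₀
      rw [Matrix.cramer_apply, step1 i₀, Pi.smul_apply, smul_eq_mul, mul_comm]
    have hmvc := Matrix.mulVec_cramer A b
    rw [hcr, Matrix.mulVec_smul] at hmvc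
    have hAc : A *ᵥ c = b := by
      funext i
      have h4 := congrFun hmvc i
      simp only [Pi.smul_apply, smul_eq_mul] at h4
      exact mul_left_cancel₀ hdetA h4
    -- Step 3: kernel argument with the β = 0 row.
    have hz : (∑ j : Fin n, (fun _ : Fin n => 0) j) ≤ l + 1 := by simp
    have hdetB := hii (fun _ => 0) hz q hq
    set B : Matrix (Fin (m + 1)) (Fin (m + 1)) ℂ :=
      Matrix.of fun i j : Fin (m + 1) =>
        if hi' : (i : ℕ) < m then LamVMulti V (α ⟨i, hi'⟩) (h j) q
        else LamVMulti V (fun _ => 0) (h j) q with hB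
    obtain ⟨w, hw0, hww⟩ := Matrix.exists_mulVec_eq_zero_iff.mpr hdetB
    have hBtop : ∀ (i : Fin m) (j : Fin (m + 1)),
        B i.castSucc j = LamVMulti V (α i) (h j) q := by
      intro i j
      have hlt : ((i.castSucc : Fin (m + 1)) : ℕ) < m := i.isLt
      simp only [hB, Matrix.of_apply, dif_pos hlt]
      have he' : (⟨((i.castSucc : Fin (m + 1)) : ℕ), hlt⟩ : Fin m) = i := Fin.ext (by simp)
      rw [he']
    have hBbot : ∀ j : Fin (m + 1), B (Fin.last m) j = h j q := by
      intro j
      have hlt : ¬ ((Fin.last m : Fin (m + 1)) : ℕ) < m := by simp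
      simp only [hB, Matrix.of_apply, dif_neg hlt, lamVMulti_index_zero]
    set w' : Fin m → ℂ := fun t => w t.castSucc with hw'
    set a : ℂ := w (Fin.last m) with ha
    have htop : ∀ i : Fin m,
        (∑ t : Fin m, A i t * w' t) + b i * a = 0 := by
      intro i
      have h2 := congrFun hww i.castSucc
      simp only [Matrix.mulVec, dotProduct, Pi.zero_apply] at h2
      rw [Fin.sum_univ_castSucc] at h2
      simp only [hBtop] at h2
      simp only [hA, hb, hw', ha, Matrix.of_apply]
      exact h2
    have htop2 : A *ᵥ w' + a • b = 0 := by
      funext i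
      simp only [Pi.add_apply, Pi.smul_apply, Pi.zero_apply, smul_eq_mul,
        Matrix.mulVec, dotProduct]
      linear_combination htop i
    have hker : ∀ v : Fin m → ℂ, A *ᵥ v = 0 → v = 0 := by
      intro v hv
      by_contra hv0
      exact hdetA (Matrix.exists_mulVec_eq_zero_iff.mp ⟨v, hv0, hv⟩)
    have hwc : w' = -(a • c) := by
      apply eq_neg_of_add_eq_zero_left
      apply hker
      rw [Matrix.mulVec_add, Matrix.mulVec_smul, hAc]
      exact htop2
    have ha0 : a ≠ 0 := by
      intro ha'
      apply hw0
      have hw'0 : w' = 0 := by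
        apply hker
        have h5 : A *ᵥ w' = A *ᵥ w' + a • b := by rw [ha', zero_smul, add_zero]
        rw [h5, htop2]
      funext j
      rcases Fin.eq_castSucc_or_eq_last j with ⟨t, rfl⟩ | rfl
      · exact congrFun hw'0 t
      · exact ha'
    have hbot : (∑ t : Fin m, h t.castSucc q * w' t) + h (Fin.last m) q * a = 0 := by
      have h2 := congrFun hww (Fin.last m)
      simp only [Matrix.mulVec, dotProduct, Pi.zero_apply] at h2
      rw [Fin.sum_univ_castSucc] at h2
      simp only [hBbot] at h2
      exact h2
    have hbot2 : ∑ t : Fin m, h t.castSucc q * w' t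
        = -(a * ∑ t : Fin m, c t * h t.castSucc q) := by
      rw [hwc, Finset.mul_sum, ← Finset.sum_neg_distrib]
      apply Finset.sum_congr rfl
      intro t _
      simp only [Pi.neg_apply, Pi.smul_apply, smul_eq_mul]
      ring
    rw [hbot2] at hbot
    have hfin : a * (h (Fin.last m) q - ∑ t : Fin m, c t * h t.castSucc q) = 0 := by
      linear_combination hbot
    rcases mul_eq_zero.mp hfin with h' | h'
    · exact absurd h' ha0
    · exact h'
  -- Conclusion: the last column of the goal matrix vanishes on O.
  intro e he q hq
  apply Matrix.det_eq_zero_of_column_eq_zero ⟨m - 1, by omega⟩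
  intro i
  have hcond : ¬ ((⟨m - 1, by omega⟩ : Fin m) : ℕ) < m - 1 := by simp
  simp only [Matrix.of_apply, dif_neg hcond]
  exact lamVMulti_eqOn_zero hOopen (α i) (fun q' hq' => key q' hq') hq

end
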